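/- arXiv:2201.09918 — 5 statements merged into one kernel-verified Lean document; each statement's English description precedes it below -/
import Mathlib

section
/- Let Y be a nonnegative random variable. Then for every positive integer n, E[Y^n] ≤ 2^n (n^n + (log E[exp(Y)])^n), provided E[exp(Y)] < ∞. -/
open MeasureTheory

lemma aux_pow_le_exp (n : ℕ) (hn : 1 ≤ n) (x : ℝ) (hx : 0 ≤ x) :
    x ^ n ≤ (n : ℝ) ^ n * Real.exp (x - n) := by
  have hn0 : (0 : ℝ) < n := by exact_mod_cast hn
  have h1 : x / n ≤ Real.exp (x / n - 1) := by
    have := Real.add_one_le_exp (x / n - 1); linarith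
  have h2 : (x / n) ^ n ≤ Real.exp (x / n - 1) ^ n :=
    pow_le_pow_left₀ (by positivity) h1 n
  have h3 : Real.exp (x / n - 1) ^ n = Real.exp (x - n) := by
    rw [← Real.exp_nat_mul]; congr 1; field_simp
  have h4 : (n : ℝ) ^ n * (x / n) ^ n = x ^ n := by
    rw [← mul_pow, mul_div_cancel₀ _ hn0.ne']
  calc x ^ n = (n : ℝ) ^ n * (x / n) ^ n := h4.symm
    _ ≤ (n : ℝ) ^ n * Real.exp (x - n) := by
        rw [← h3]; exact mul_le_mul_of_nonneg_left h2 (by positivity)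

/-- For a nonnegative random variable Y with E[e^Y] < ∞ and any n ≥ 1,
E[Yⁿ] ≤ 2ⁿ (nⁿ + (log E[e^Y])ⁿ). -/
theorem stmt_6 {Ω : Type*} [MeasurableSpace Ω] (P : Measure Ω) [IsProbabilityMeasure P]
    (Y : Ω → ℝ) (hpos : ∀ ω, 0 ≤ Y ω)
    (hInt : Integrable (fun ω => Real.exp (Y ω)) P)
    (n : ℕ) (hn : 1 ≤ n) :
    ∫ ω, (Y ω) ^ n ∂P
      ≤ 2 ^ n * ((n : ℝ) ^ n + (Real.log (∫ ω, Real.exp (Y ω) ∂P)) ^ n) := by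
  set a : ℝ := Real.log (∫ ω, Real.exp (Y ω) ∂P) with ha
  have hone : (1 : ℝ) ≤ ∫ ω, Real.exp (Y ω) ∂P := by
    calc (1 : ℝ) = ∫ _ω, (1 : ℝ) ∂P := by simp
      _ ≤ ∫ ω, Real.exp (Y ω) ∂P := by
          refine integral_mono (integrable_const 1) hInt fun ω => ?_
          simpa using Real.one_le_exp (hpos ω)
  have ha0 : 0 ≤ a := Real.log_nonneg hone
  have hEexp : Real.exp a = ∫ ω, Real.exp (Y ω) ∂P :=
    Real.exp_log (lt_of_lt_of_le one_pos hone)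
  set c : ℝ := 2 ^ n * (n : ℝ) ^ n * Real.exp (-(n : ℝ) - a) with hc
  have hc0 : 0 ≤ c := by positivity
  -- pointwise bound
  have hpt : ∀ ω, Y ω ^ n ≤ (2 * a) ^ n + c * Real.exp (Y ω) := by
    intro ω
    by_cases hcase : Y ω ≤ 2 * a
    · have h1 : Y ω ^ n ≤ (2 * a) ^ n := pow_le_pow_left₀ (hpos ω) hcase n
      have h2 : 0 ≤ c * Real.exp (Y ω) := by positivity
      linarith
    · push_neg at hcase
      have hY2 : 0 ≤ Y ω / 2 := by linarith [hpos ω]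
      have h1 : (Y ω / 2) ^ n ≤ (n : ℝ) ^ n * Real.exp (Y ω / 2 - n) :=
        aux_pow_le_exp n hn _ hY2
      have h2 : Real.exp (Y ω / 2 - n) ≤ Real.exp (-(n : ℝ) - a) * Real.exp (Y ω) := by
        rw [← Real.exp_add]
        exact Real.exp_le_exp.mpr (by linarith)
      have h3 : Y ω ^ n = 2 ^ n * (Y ω / 2) ^ n := by
        rw [← mul_pow]; ring_nf
      have h4 : (0 : ℝ) ≤ (2 * a) ^ n := by positivity
      calc Y ω ^ n = 2 ^ n * (Y ω / 2) ^ n := h3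
        _ ≤ 2 ^ n * ((n : ℝ) ^ n * (Real.exp (-(n : ℝ) - a) * Real.exp (Y ω))) := by
            refine mul_le_mul_of_nonneg_left (h1.trans ?_) (by positivity)
            exact mul_le_mul_of_nonneg_left h2 (by positivity)
        _ = c * Real.exp (Y ω) := by rw [hc]; ring
        _ ≤ (2 * a) ^ n + c * Real.exp (Y ω) := by linarith
  -- measurability of Y
  have hY : AEStronglyMeasurable Y P := by
    have h1 : AEMeasurable (fun ω => Real.exp (Y ω)) P := hInt.1.aemeasurable
    have h2 : AEMeasurable (fun ω => Real.log (Real.exp (Y ω))) P :=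
      Real.measurable_log.comp_aemeasurable h1
    have h3 : (fun ω => Real.log (Real.exp (Y ω))) = Y := by
      funext ω; exact Real.log_exp _
    exact (h3 ▸ h2).aestronglyMeasurable
  have hg : Integrable (fun ω => (2 * a) ^ n + c * Real.exp (Y ω)) P :=
    (integrable_const _).add (hInt.const_mul c)
  have hYn : Integrable (fun ω => Y ω ^ n) P := by
    refine hg.mono' (hY.pow _) (Filter.Eventually.of_forall fun ω => ?_)
    rw [Real.norm_eq_abs, abs_of_nonneg (pow_nonneg (hpos ω) n)]
    exact hpt ω
  have hmono : ∫ ω, Y ω ^ n ∂P ≤ ∫ ω, ((2 * a) ^ n + c * Real.exp (Y ω)) ∂P :=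
    integral_mono hYn hg hpt
  have hcalc : ∫ ω, ((2 * a) ^ n + c * Real.exp (Y ω)) ∂P
      = (2 * a) ^ n + c * Real.exp a := by
    rw [integral_add (integrable_const _) (hInt.const_mul c), integral_const,
      integral_const_mul, hEexp]
    simp
  have hfin : (2 * a) ^ n + c * Real.exp a ≤ 2 ^ n * ((n : ℝ) ^ n + a ^ n) := by
    have h1 : c * Real.exp a = 2 ^ n * (n : ℝ) ^ n * Real.exp (-(n : ℝ)) := by
      rw [hc, mul_assoc, mul_assoc, ← Real.exp_add]; ring_nf
    have h2 : Real.exp (-(n : ℝ)) ≤ 1 := Real.exp_le_one_iff.mpr (neg_nonpos.mpr (Nat.cast_nonneg n))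
    have h3 : 2 ^ n * (n : ℝ) ^ n * Real.exp (-(n : ℝ)) ≤ 2 ^ n * (n : ℝ) ^ n :=
      mul_le_of_le_one_right (by positivity) h2
    rw [h1, mul_pow]
    nlinarith [pow_nonneg ha0 n]
  linarith [hmono, hcalc ▸ hmono]
end

section
/- Let M₁ and M₂ be N×N real symmetric matrices with rank(M₁ − M₂) = r, and let f: ℝ → ℝ be a continuous function of bounded variation. Then |∫ f dμ_{M₁} − ∫ f dμ_{M₂}| ≤ (r/N)·‖f‖_BV, where μ_{M_i} denotes the empirical spectral distribution of M_i (the uniform measure on its eigenvalues, with multiplicity). -/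
open Matrix Module Submodule Finset
section helpers

variable {N : ℕ}

local notation "𝔼" => EuclideanSpace ℝ (Fin N)

lemma repr_toEuclideanLin {A : Matrix (Fin N) (Fin N) ℝ} (hA : A.IsHermitian)
    (v : 𝔼) (j : Fin N) :
    hA.eigenvectorBasis.repr (toEuclideanLin A v) j
      = hA.eigenvalues j * hA.eigenvectorBasis.repr v j := by
  have hsym := (isHermitian_iff_isSymmetric.1 hA)
  have hb : toEuclideanLin A (hA.eigenvectorBasis j)
      = hA.eigenvalues j • (hA.eigenvectorBasis j) := by
    apply (WithLp.equiv 2 _).injective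
    simpa [toEuclideanLin_apply] using hA.mulVec_eigenvectorBasis j
  rw [OrthonormalBasis.repr_apply_apply, OrthonormalBasis.repr_apply_apply,
    ← hsym (hA.eigenvectorBasis j) v, hb, real_inner_smul_left]

lemma inner_toEuclideanLin {A : Matrix (Fin N) (Fin N) ℝ} (hA : A.IsHermitian) (v : 𝔼) :
    (inner ℝ v (toEuclideanLin A v) : ℝ)
      = ∑ j, hA.eigenvalues j * (hA.eigenvectorBasis.repr v j)^2 := by
  rw [← hA.eigenvectorBasis.repr.inner_map_map v (toEuclideanLin A v)]
  rw [PiLp.inner_apply]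
  refine Finset.sum_congr rfl fun j _ => ?_
  rw [repr_toEuclideanLin hA v j]
  simp [RCLike.inner_apply]
  ring

lemma repr_eq_zero_of_mem_span (B : OrthonormalBasis (Fin N) ℝ 𝔼) (S : Set (Fin N)) {v : 𝔼}
    (hv : v ∈ span ℝ (B '' S)) {j : Fin N} (hj : j ∉ S) : B.repr v j = 0 := by
  rw [OrthonormalBasis.repr_apply_apply]
  have hle : span ℝ (B '' S) ≤ LinearMap.ker ((innerₛₗ ℝ (B j) : 𝔼 →ₗ[ℝ] ℝ)) := by
    rw [span_le]
    rintro x ⟨i, hi, rfl⟩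
    simp only [SetLike.mem_coe, LinearMap.mem_ker, innerₛₗ_apply_apply]
    exact B.orthonormal.2 (fun h => hj (h ▸ hi))
  simpa using hle hv

lemma finrank_span_orthonormal (B : OrthonormalBasis (Fin N) ℝ 𝔼) (S : Finset (Fin N)) :
    finrank ℝ (span ℝ (B '' (S : Set (Fin N)))) = S.card := by
  have h : (B '' (S : Set (Fin N))) = Set.range (⇑B ∘ (Subtype.val : S → Fin N)) := by
    ext y; simp [Set.image, Set.range, Function.comp]
  rw [h, finrank_span_eq_card
    (B.orthonormal.linearIndependent.comp Subtype.val Subtype.val_injective)]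
  exact Fintype.card_coe S

lemma finrank_triple (U V W : Submodule ℝ 𝔼) (h : U ⊓ V ⊓ W = ⊥) :
    finrank ℝ U + finrank ℝ V + finrank ℝ W ≤ 2 * N := by
  have h1 := Submodule.finrank_sup_add_finrank_inf_eq U V
  have h2 := Submodule.finrank_sup_add_finrank_inf_eq (U ⊓ V) W
  rw [h, finrank_bot, add_zero] at h2
  have l1 : finrank ℝ ↥(U ⊔ V) ≤ N := by
    simpa [finrank_euclideanSpace_fin] using Submodule.finrank_le (U ⊔ V)
  have l2 : finrank ℝ ↥((U ⊓ V) ⊔ W) ≤ N := by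
    simpa [finrank_euclideanSpace_fin] using Submodule.finrank_le ((U ⊓ V) ⊔ W)
  omega

lemma finrank_ker_toEuclideanLin (A : Matrix (Fin N) (Fin N) ℝ) :
    finrank ℝ (LinearMap.ker (toEuclideanLin A)) + A.rank = N := by
  have h := LinearMap.finrank_range_add_finrank_ker (toEuclideanLin A : 𝔼 →ₗ[ℝ] 𝔼)
  rw [finrank_euclideanSpace_fin] at h
  have : A.rank = finrank ℝ (LinearMap.range (toEuclideanLin A : 𝔼 →ₗ[ℝ] 𝔼)) := by
    have := Matrix.rank_eq_finrank_range_toLin A (PiLp.basisFun 2 ℝ (Fin N))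
      (PiLp.basisFun 2 ℝ (Fin N))
    rw [Matrix.toEuclideanLin_eq_toLin]; exact this
  omega

lemma inner_self_repr (B : OrthonormalBasis (Fin N) ℝ 𝔼) (v : 𝔼) :
    (inner ℝ v v : ℝ) = ∑ j, (B.repr v j)^2 := by
  rw [← B.repr.inner_map_map v v, PiLp.inner_apply]
  simp [RCLike.inner_apply, sq]

lemma count_le (M₁ M₂ : Matrix (Fin N) (Fin N) ℝ) (h₁ : M₁.IsHermitian) (h₂ : M₂.IsHermitian)
    (x : ℝ) :
    (Finset.univ.filter (fun i => h₂.eigenvalues i ≤ x)).card ≤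
    (Finset.univ.filter (fun i => h₁.eigenvalues i ≤ x)).card + (M₁ - M₂).rank := by
  set S₁ := Finset.univ.filter (fun i => h₁.eigenvalues i ≤ x) with hS₁
  set S₁' := Finset.univ.filter (fun i => ¬ h₁.eigenvalues i ≤ x) with hS₁'
  set S₂ := Finset.univ.filter (fun i => h₂.eigenvalues i ≤ x) with hS₂
  set V := span ℝ (⇑h₂.eigenvectorBasis '' (S₂ : Set (Fin N))) with hV
  set W := span ℝ (⇑h₁.eigenvectorBasis '' (S₁' : Set (Fin N))) with hW
  set K := LinearMap.ker (toEuclideanLin (M₁ - M₂)) with hK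
  have hbot : V ⊓ W ⊓ K = ⊥ := by
    rw [eq_bot_iff]
    rintro v ⟨⟨hvV, hvW⟩, hvK⟩
    rw [Submodule.mem_bot]
    by_contra hv0
    -- T₁ v = T₂ v
    have hK' : toEuclideanLin M₁ v = toEuclideanLin M₂ v := by
      have h0 : toEuclideanLin (M₁ - M₂) v = 0 := hvK
      rw [map_sub, LinearMap.sub_apply, sub_eq_zero] at h0
      exact h0
    have hpos : (0:ℝ) < inner ℝ v v := by
      have hnn : (0:ℝ) ≤ inner ℝ v v := real_inner_self_nonneg
      have hne : (inner ℝ v v : ℝ) ≠ 0 := fun h => hv0 (inner_self_eq_zero.mp h)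
      exact lt_of_le_of_ne hnn (Ne.symm hne)
    -- q₂ ≤ x ⟨v,v⟩
    have hq₂ : (inner ℝ v (toEuclideanLin M₂ v) : ℝ) ≤ x * inner ℝ v v := by
      rw [inner_toEuclideanLin h₂ v, inner_self_repr h₂.eigenvectorBasis v, Finset.mul_sum]
      refine Finset.sum_le_sum fun j _ => ?_
      by_cases hj : j ∈ S₂
      · have : h₂.eigenvalues j ≤ x := by simpa [hS₂] using hj
        nlinarith [sq_nonneg (h₂.eigenvectorBasis.repr v j)]
      · rw [repr_eq_zero_of_mem_span h₂.eigenvectorBasis _ hvV (by simpa using hj)]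
        simp
    -- x ⟨v,v⟩ < q₁
    have hq₁ : x * inner ℝ v v < (inner ℝ v (toEuclideanLin M₁ v) : ℝ) := by
      rw [inner_toEuclideanLin h₁ v, inner_self_repr h₁.eigenvectorBasis v, Finset.mul_sum]
      have hex : ∃ j, h₁.eigenvectorBasis.repr v j ≠ 0 := by
        by_contra hall
        push_neg at hall
        have : (inner ℝ v v : ℝ) = 0 := by
          rw [inner_self_repr h₁.eigenvectorBasis v]
          exact Finset.sum_eq_zero fun j _ => by rw [hall j]; ring
        linarith
      obtain ⟨j₀, hj₀⟩ := hex
      have hj₀S : j₀ ∈ S₁' := by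
        by_contra h
        exact hj₀ (repr_eq_zero_of_mem_span h₁.eigenvectorBasis _ hvW (by simpa using h))
      refine Finset.sum_lt_sum (fun j _ => ?_) ⟨j₀, Finset.mem_univ j₀, ?_⟩
      · by_cases hj : j ∈ S₁'
        · have : x < h₁.eigenvalues j := by
            have := Finset.mem_filter.mp hj; push_neg at this; exact this.2
          nlinarith [sq_nonneg (h₁.eigenvectorBasis.repr v j)]
        · rw [repr_eq_zero_of_mem_span h₁.eigenvectorBasis _ hvW (by simpa using hj)]
          simp
      · have hx : x < h₁.eigenvalues j₀ := by
          have := Finset.mem_filter.mp hj₀S; push_neg at this; exact this.2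
        have := sq_pos_of_ne_zero hj₀
        nlinarith
    rw [hK'] at hq₁
    linarith
  have htriple := finrank_triple V W K hbot
  rw [hV, hW, finrank_span_orthonormal, finrank_span_orthonormal] at htriple
  have hker := finrank_ker_toEuclideanLin (M₁ - M₂)
  rw [← hK] at hker
  have hcards : S₁.card + S₁'.card = N := by
    have := Finset.card_filter_add_card_filter_not
      (s := Finset.univ) (fun i => h₁.eigenvalues i ≤ x)
    simpa [hS₁, hS₁'] using this
  have hrle : (M₁ - M₂).rank ≤ N := by
    have := Matrix.rank_le_card_width (M₁ - M₂); simpa using this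
  omega


lemma chain_bound {f : ℝ → ℝ} (hBV : eVariationOn f Set.univ ≠ ⊤)
    (m : ℕ) (g h : ℕ → ℝ)
    (hstep : ∀ t, t + 1 < m → max (g t) (h t) ≤ min (g (t+1)) (h (t+1))) :
    ∑ t ∈ Finset.range m, |f (g t) - f (h t)| ≤ (eVariationOn f Set.univ).toReal := by
  rcases Nat.eq_zero_or_pos m with hm | hm
  · simp [hm, ENNReal.toReal_nonneg]
  set K := 2 * m - 1 with hK
  set core : ℕ → ℝ := fun j => if Even j then min (g (j/2)) (h (j/2))
    else max (g (j/2)) (h (j/2)) with hcore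
  set u : ℕ → ℝ := fun k => core (min k K) with hu
  have hcorestep : ∀ j, j + 1 ≤ K → core j ≤ core (j+1) := by
    intro j hj
    rcases Nat.even_or_odd j with hev | hod
    · have h1 : ¬ Even (j+1) := by simp [Nat.even_add_one, hev]
      have h2 : (j+1)/2 = j/2 := by
        obtain ⟨t, rfl⟩ := hev; omega
      simp only [hcore, if_pos hev, if_neg h1, h2]
      exact min_le_max
    · obtain ⟨t, rfl⟩ := hod
      have h1 : ¬ Even (2*t+1) := by simp [Nat.even_add_one]
      have h2 : Even (2*t+1+1) := ⟨t+1, by ring⟩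
      have h3 : (2*t+1)/2 = t := by omega
      have h4 : (2*t+1+1)/2 = t+1 := by omega
      simp only [hcore, if_neg h1, if_pos h2, h3, h4]
      exact hstep t (by omega)
  have humono : Monotone u := by
    apply monotone_nat_of_le_succ
    intro k
    simp only [hu]
    rcases le_or_gt K k with h | h
    · rw [min_eq_right h, min_eq_right (by omega)]
    · rw [min_eq_left (by omega), min_eq_left (by omega)]
      exact hcorestep k (by omega)
  have hchain := eVariationOn.sum_le (f := f) (n := K) humono (fun i => Set.mem_univ (u i))
  have key : ∀ t ∈ Finset.range m,
      edist (f (u (2*t+1))) (f (u (2*t))) = edist (f (g t)) (f (h t)) := by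
    intro t ht
    rw [Finset.mem_range] at ht
    have e1 : u (2*t) = min (g t) (h t) := by
      simp only [hu, hcore]
      rw [min_eq_left (by omega), if_pos ⟨t, by ring⟩]
      have h2t : (2*t)/2 = t := by omega
      rw [h2t]
    have e2 : u (2*t+1) = max (g t) (h t) := by
      simp only [hu, hcore]
      rw [min_eq_left (by omega), if_neg (by simp [Nat.even_add_one, parity_simps])]
      have h2t : (2*t+1)/2 = t := by omega
      rw [h2t]
    rw [e1, e2]
    rcases le_total (g t) (h t) with h' | h'
    · rw [min_eq_left h', max_eq_right h', edist_comm]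
    · rw [min_eq_right h', max_eq_left h']
  have hsub : ∑ t ∈ Finset.range m, edist (f (g t)) (f (h t)) ≤ eVariationOn f Set.univ := by
    calc ∑ t ∈ Finset.range m, edist (f (g t)) (f (h t))
        = ∑ t ∈ Finset.range m, edist (f (u (2*t+1))) (f (u (2*t))) :=
          (Finset.sum_congr rfl key).symm
      _ = ∑ k ∈ (Finset.range m).image (fun t => 2*t),
            edist (f (u (k+1))) (f (u k)) := by
          rw [Finset.sum_image (fun x _ y _ hxy => by omega)]
      _ ≤ ∑ k ∈ Finset.range K, edist (f (u (k+1))) (f (u k)) := by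
          apply Finset.sum_le_sum_of_subset
          intro k hk
          simp only [Finset.mem_image, Finset.mem_range] at hk ⊢
          obtain ⟨t, ht, rfl⟩ := hk
          omega
      _ ≤ eVariationOn f Set.univ := hchain
  have hreal : ∑ t ∈ Finset.range m, |f (g t) - f (h t)|
      = (∑ t ∈ Finset.range m, edist (f (g t)) (f (h t))).toReal := by
    rw [ENNReal.toReal_sum (fun t _ => edist_ne_top _ _)]
    refine Finset.sum_congr rfl fun t _ => ?_
    rw [← dist_edist, Real.dist_eq]
  rw [hreal]
  exact ENNReal.toReal_mono hBV hsub


lemma sorted_interlace {N r : ℕ} (a b : Fin N → ℝ) (ha : Monotone a) (hb : Monotone b)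
    (hcount : ∀ x : ℝ, (Finset.univ.filter (fun i => a i ≤ x)).card ≤
      (Finset.univ.filter (fun i => b i ≤ x)).card + r) :
    ∀ (i : ℕ) (h : i + r < N), b ⟨i, by omega⟩ ≤ a ⟨i + r, h⟩ := by
  intro i h
  by_contra hlt
  push_neg at hlt
  set x := a ⟨i + r, h⟩ with hx
  have h1 : i + r + 1 ≤ (Finset.univ.filter (fun j => a j ≤ x)).card := by
    have hsub : (Finset.Iic (⟨i + r, h⟩ : Fin N)) ⊆
        Finset.univ.filter (fun j => a j ≤ x) := by
      intro j hj
      rw [Finset.mem_Iic] at hj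
      simp only [Finset.mem_filter, Finset.mem_univ, true_and]
      exact ha hj
    calc i + r + 1 = (Finset.Iic (⟨i + r, h⟩ : Fin N)).card := by rw [Fin.card_Iic]
      _ ≤ _ := Finset.card_le_card hsub
  have h2 : (Finset.univ.filter (fun j => b j ≤ x)).card ≤ i := by
    have hsub : Finset.univ.filter (fun j => b j ≤ x) ⊆
        Finset.Iio (⟨i, by omega⟩ : Fin N) := by
      intro j hj
      simp only [Finset.mem_filter, Finset.mem_univ, true_and] at hj
      rw [Finset.mem_Iio]
      by_contra hge
      push_neg at hge
      exact absurd (le_trans (hb hge) hj) (not_le.mpr hlt)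
    calc (Finset.univ.filter (fun j => b j ≤ x)).card
        ≤ (Finset.Iio (⟨i, by omega⟩ : Fin N)).card := Finset.card_le_card hsub
      _ = i := Fin.card_Iio _
  have := hcount x
  omega

lemma sum_abs_le {N r : ℕ} (hN : 0 < N) (hr : 0 < r) (a b : Fin N → ℝ)
    (ha : Monotone a) (hb : Monotone b)
    (hab : ∀ (i : ℕ) (h : i + r < N), b ⟨i, by omega⟩ ≤ a ⟨i + r, h⟩)
    (hba : ∀ (i : ℕ) (h : i + r < N), a ⟨i, by omega⟩ ≤ b ⟨i + r, h⟩)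
    {f : ℝ → ℝ} (hBV : eVariationOn f Set.univ ≠ ⊤) :
    ∑ i, |f (a i) - f (b i)| ≤ r * (eVariationOn f Set.univ).toReal := by
  set m : ℕ → ℕ := fun c => (N - c + r - 1) / r with hm
  have hmiff : ∀ c t, t < m c ↔ c + t * r < N := by
    intro c t
    have h1 : t < m c ↔ (t + 1) * r ≤ N - c + r - 1 := by
      rw [hm]
      constructor
      · intro h
        exact (Nat.le_div_iff_mul_le hr).mp h
      · intro h
        exact (Nat.le_div_iff_mul_le hr).mpr h
    rw [h1, Nat.succ_mul]
    set s := t * r with hs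
    omega
  set e : ℕ → ℕ → Fin N := fun c t => ⟨min (c + t * r) (N - 1), by omega⟩ with he
  have heval : ∀ c t, c + t * r < N → (e c t : ℕ) = c + t * r := by
    intro c t h
    simp only [he]
    omega
  have hclass : ∀ c, ∑ t ∈ Finset.range (m c), |f (a (e c t)) - f (b (e c t))|
      ≤ (eVariationOn f Set.univ).toReal := by
    intro c
    apply chain_bound hBV
    intro t ht
    have h1 : c + (t + 1) * r < N := (hmiff c (t+1)).1 ht
    have hsm : (t + 1) * r = t * r + r := by ring
    have h0 : c + t * r < N := by omega
    have hlt : c + t * r + r < N := by omega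
    have het : e c t = (⟨c + t * r, by omega⟩ : Fin N) := Fin.ext (heval c t h0)
    have het1 : e c (t+1) = (⟨c + t * r + r, hlt⟩ : Fin N) := by
      apply Fin.ext
      rw [heval c (t+1) h1]
      ring
    have hle : e c t ≤ e c (t+1) := by
      rw [het, het1]; exact Fin.mk_le_mk.mpr (by omega)
    refine max_le (le_min (ha hle) ?_) (le_min ?_ (hb hle))
    · rw [het, het1]; exact hba (c + t * r) hlt
    · rw [het, het1]; exact hab (c + t * r) hlt
  have hsplit : ∑ i : Fin N, |f (a i) - f (b i)|
      = ∑ c ∈ Finset.range r, ∑ t ∈ Finset.range (m c), |f (a (e c t)) - f (b (e c t))| := by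
    rw [Finset.sum_sigma']
    refine Finset.sum_nbij' (fun i => (⟨(i : ℕ) % r, (i : ℕ) / r⟩ : Σ _ : ℕ, ℕ))
      (fun p => e p.1 p.2) ?_ ?_ ?_ ?_ ?_
    · intro i _
      simp only [Finset.mem_sigma, Finset.mem_range]
      refine ⟨Nat.mod_lt _ hr, (hmiff _ _).2 ?_⟩
      rw [Nat.mod_add_div']
      exact i.2
    · intro p hp
      exact Finset.mem_univ _
    · intro i _
      show e ((i : ℕ) % r) ((i : ℕ) / r) = i
      apply Fin.ext
      rw [heval _ _ (by rw [Nat.mod_add_div']; exact i.2), Nat.mod_add_div']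
    · intro p hp
      simp only [Finset.mem_sigma, Finset.mem_range] at hp
      have hvalid : p.1 + p.2 * r < N := (hmiff _ _).1 hp.2
      have hv : ((e p.1 p.2 : Fin N) : ℕ) = p.1 + p.2 * r := heval p.1 p.2 hvalid
      show (⟨((e p.1 p.2 : Fin N) : ℕ) % r, ((e p.1 p.2 : Fin N) : ℕ) / r⟩ : Σ _ : ℕ, ℕ) = p
      rw [hv, Nat.add_mul_mod_self_right, Nat.mod_eq_of_lt hp.1,
        Nat.add_mul_div_right _ _ hr, Nat.div_eq_of_lt hp.1, zero_add]
    · intro i _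
      show |f (a i) - f (b i)| = |f (a (e ((i:ℕ)%r) ((i:ℕ)/r))) - f (b (e ((i:ℕ)%r) ((i:ℕ)/r)))|
      have : e ((i : ℕ) % r) ((i : ℕ) / r) = i := by
        apply Fin.ext
        rw [heval _ _ (by rw [Nat.mod_add_div']; exact i.2), Nat.mod_add_div']
      rw [this]
  rw [hsplit]
  calc ∑ c ∈ Finset.range r, ∑ t ∈ Finset.range (m c), |f (a (e c t)) - f (b (e c t))|
      ≤ ∑ _c ∈ Finset.range r, (eVariationOn f Set.univ).toReal :=
        Finset.sum_le_sum fun c _ => hclass c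
    _ = r * (eVariationOn f Set.univ).toReal := by
        rw [Finset.sum_const, Finset.card_range, nsmul_eq_mul]

end helpers

open Matrix

/-- rank inequality for empirical spectral distributions:
|∫ f dμ_{M₁} − ∫ f dμ_{M₂}| ≤ (r/N)‖f‖_BV when rank(M₁ − M₂) = r. -/
theorem stmt_7 {N : ℕ} (hN : 0 < N) (M₁ M₂ : Matrix (Fin N) (Fin N) ℝ)
    (h₁ : M₁.IsHermitian) (h₂ : M₂.IsHermitian) (r : ℕ) (hr : (M₁ - M₂).rank = r)
    (f : ℝ → ℝ) (hf : Continuous f) (hBV : BoundedVariationOn f Set.univ) :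
    |(1 / (N : ℝ)) * ∑ i, f (h₁.eigenvalues i)
      - (1 / (N : ℝ)) * ∑ i, f (h₂.eigenvalues i)|
      ≤ ((r : ℝ) / N) * (eVariationOn f Set.univ).toReal := by
  rcases Nat.eq_zero_or_pos r with hr0 | hrpos
  · -- rank zero : M₁ = M₂
    subst hr0
    have hM : M₁ - M₂ = 0 := by
      have h0 : LinearMap.range (M₁ - M₂).mulVecLin = ⊥ := by
        rw [← Submodule.finrank_eq_zero (R := ℝ)]
        exact hr
      have hz : (M₁ - M₂).mulVecLin = 0 := LinearMap.range_eq_bot.mp h0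
      ext i j
      have := congrFun (congrArg (fun g => g (Pi.single j 1)) congr(⇑$hz)) i
      simpa [Matrix.mulVecLin_apply, Matrix.mulVec_single] using this
    have hM' : M₁ = M₂ := by
      have := sub_eq_zero.mp hM; exact this
    subst hM'
    have : h₁ = h₂ := rfl
    subst this
    simp
  · -- main case
    set V := (eVariationOn f Set.univ).toReal with hV
    have hVne : eVariationOn f Set.univ ≠ ⊤ := hBV
    -- sorted eigenvalue sequences
    set a : Fin N → ℝ := h₁.eigenvalues ∘ Tuple.sort h₁.eigenvalues with ha
    set b : Fin N → ℝ := h₂.eigenvalues ∘ Tuple.sort h₂.eigenvalues with hb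
    have hamono : Monotone a := Tuple.monotone_sort _
    have hbmono : Monotone b := Tuple.monotone_sort _
    -- counts are invariant under sorting
    have hcard : ∀ (g : Fin N → ℝ) (σ : Equiv.Perm (Fin N)) (x : ℝ),
        (Finset.univ.filter (fun i => g (σ i) ≤ x)).card
          = (Finset.univ.filter (fun i => g i ≤ x)).card := by
      intro g σ x
      apply Finset.card_nbij' σ σ.symm
      · intro i hi
        rw [Finset.mem_coe, Finset.mem_filter] at hi ⊢
        exact ⟨Finset.mem_univ _, hi.2⟩
      · intro i hi
        rw [Finset.mem_coe, Finset.mem_filter] at hi ⊢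
        refine ⟨Finset.mem_univ _, ?_⟩
        simpa using hi.2
      · intro i _; simp
      · intro i _; simp
    -- rank symmetry
    have hrank21 : (M₂ - M₁).rank = r := by
      have hneg : (M₂ - M₁) = -(M₁ - M₂) := (neg_sub M₁ M₂).symm
      have : (-(M₁ - M₂)).mulVecLin = -((M₁ - M₂).mulVecLin) := by
        apply LinearMap.ext; intro v
        simp only [Matrix.mulVecLin_apply, LinearMap.neg_apply, Matrix.neg_mulVec]
      rw [hneg, Matrix.rank, this, LinearMap.range_neg, ← Matrix.rank, hr]
    -- counting inequalities, sorted versions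
    have hcount12 : ∀ x : ℝ, (Finset.univ.filter (fun i => a i ≤ x)).card ≤
        (Finset.univ.filter (fun i => b i ≤ x)).card + r := by
      intro x
      rw [ha, hb]
      show (Finset.univ.filter (fun i => h₁.eigenvalues (Tuple.sort h₁.eigenvalues i) ≤ x)).card
        ≤ (Finset.univ.filter (fun i => h₂.eigenvalues (Tuple.sort h₂.eigenvalues i) ≤ x)).card + r
      rw [hcard _ _ x, hcard _ _ x]
      have := count_le M₂ M₁ h₂ h₁ x
      rwa [hrank21] at this
    have hcount21 : ∀ x : ℝ, (Finset.univ.filter (fun i => b i ≤ x)).card ≤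
        (Finset.univ.filter (fun i => a i ≤ x)).card + r := by
      intro x
      rw [ha, hb]
      show (Finset.univ.filter (fun i => h₂.eigenvalues (Tuple.sort h₂.eigenvalues i) ≤ x)).card
        ≤ (Finset.univ.filter (fun i => h₁.eigenvalues (Tuple.sort h₁.eigenvalues i) ≤ x)).card + r
      rw [hcard _ _ x, hcard _ _ x]
      have := count_le M₁ M₂ h₁ h₂ x
      rwa [hr] at this
    -- interlacing
    have hab : ∀ (i : ℕ) (h : i + r < N), b ⟨i, by omega⟩ ≤ a ⟨i + r, h⟩ :=
      sorted_interlace a b hamono hbmono hcount12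
    have hba : ∀ (i : ℕ) (h : i + r < N), a ⟨i, by omega⟩ ≤ b ⟨i + r, h⟩ :=
      sorted_interlace b a hbmono hamono hcount21
    -- main bound
    have hmain : ∑ i, |f (a i) - f (b i)| ≤ r * V :=
      sum_abs_le hN hrpos a b hamono hbmono hab hba hVne
    -- sums over sorted = sums over original
    have hsum1 : ∑ i, f (h₁.eigenvalues i) = ∑ i, f (a i) := by
      rw [ha]
      exact (Equiv.sum_comp (Tuple.sort h₁.eigenvalues) (fun i => f (h₁.eigenvalues i))).symm
    have hsum2 : ∑ i, f (h₂.eigenvalues i) = ∑ i, f (b i) := by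
      rw [hb]
      exact (Equiv.sum_comp (Tuple.sort h₂.eigenvalues) (fun i => f (h₂.eigenvalues i))).symm
    rw [hsum1, hsum2]
    have habs : |∑ i, f (a i) - ∑ i, f (b i)| ≤ r * V := by
      rw [← Finset.sum_sub_distrib]
      exact le_trans (Finset.abs_sum_le_sum_abs _ _) hmain
    have hNpos : (0:ℝ) < N := by exact_mod_cast hN
    rw [← mul_sub, abs_mul, abs_of_pos (by positivity : (0:ℝ) < 1/(N:ℝ))]
    calc 1/(N:ℝ) * |∑ i, f (a i) - ∑ i, f (b i)| ≤ 1/(N:ℝ) * (r * V) := by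
          exact mul_le_mul_of_nonneg_left habs (by positivity)
      _ = ((r : ℝ) / N) * V := by ring
end

section
/- Fix γ > 0, an integer p ≥ 2, l ≥ 1, and nonnegative reals ζ_1,...,ζ_l and ξ_{k,r} for 1 ≤ k ≤ l, 1 ≤ r ≤ p−1. Define g: ℝ_+^{l(p−1)} → ℝ by g(y) = log(1 + ∑_{k=1}^l ζ_k² / (γ + ∑_{r=1}^{p−1} ξ_{k,r}² e^{−y_{k,r}})). Then g is differentiable and ∑_{k,r} |∂_{y_{k,r}} g(y)| ≤ χ/(γ + χ) for all y, where χ = ∑_{k=1}^l ζ_k². -/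
set_option maxHeartbeats 1000000 in
/-- the function g(y) = log(1 + ∑_k ζ_k²/(γ + ∑_r ξ_{k,r}² e^{−y_{k,r}}))
is differentiable, and its gradient ℓ¹-norm is bounded by χ/(γ+χ) where χ = ∑_k ζ_k². -/
theorem stmt_10 (γ : ℝ) (hγ : 0 < γ) (p l : ℕ) (hp : 2 ≤ p) (hl : 1 ≤ l)
    (ζ : Fin l → ℝ) (ξ : Fin l × Fin (p - 1) → ℝ)
    (hζ : ∀ k, 0 ≤ ζ k) (hξ : ∀ i, 0 ≤ ξ i) :
    let g : (Fin l × Fin (p - 1) → ℝ) → ℝ := fun y =>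
      Real.log (1 + ∑ k : Fin l,
        (ζ k) ^ 2 / (γ + ∑ r : Fin (p - 1), (ξ (k, r)) ^ 2 * Real.exp (-(y (k, r)))))
    Differentiable ℝ g ∧
      ∀ y : Fin l × Fin (p - 1) → ℝ, (∀ i, 0 ≤ y i) →
        ∑ i : Fin l × Fin (p - 1), |fderiv ℝ g y (Pi.single i 1)|
          ≤ (∑ k : Fin l, (ζ k) ^ 2) / (γ + ∑ k : Fin l, (ζ k) ^ 2) := by
  intro g
  have hdpos : ∀ (y : Fin l × Fin (p - 1) → ℝ) (k : Fin l),
      0 < γ + ∑ r : Fin (p - 1), (ξ (k, r)) ^ 2 * Real.exp (-(y (k, r))) := by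
    intro y k
    have : (0:ℝ) ≤ ∑ r : Fin (p - 1), (ξ (k, r)) ^ 2 * Real.exp (-(y (k, r))) :=
      Finset.sum_nonneg fun r _ => by positivity
    linarith
  have hSnonneg : ∀ (y : Fin l × Fin (p - 1) → ℝ),
      0 ≤ ∑ k : Fin l, (ζ k) ^ 2 / (γ + ∑ r : Fin (p - 1), (ξ (k, r)) ^ 2 * Real.exp (-(y (k, r)))) :=
    fun y => Finset.sum_nonneg fun k _ => div_nonneg (by positivity) (hdpos y k).le
  have h1S : ∀ (y : Fin l × Fin (p - 1) → ℝ),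
      0 < 1 + ∑ k : Fin l, (ζ k) ^ 2 / (γ + ∑ r : Fin (p - 1), (ξ (k, r)) ^ 2 * Real.exp (-(y (k, r)))) :=
    fun y => by linarith [hSnonneg y]
  have key : ∀ y : Fin l × Fin (p - 1) → ℝ,
      ∃ G : (Fin l × Fin (p - 1) → ℝ) →L[ℝ] ℝ, HasFDerivAt g G y ∧
        ∀ i, G (Pi.single i 1) =
          (ζ i.1) ^ 2 * ((ξ i) ^ 2 * Real.exp (-(y i))) /
            ((1 + ∑ k : Fin l, (ζ k) ^ 2 / (γ + ∑ r : Fin (p - 1), (ξ (k, r)) ^ 2 * Real.exp (-(y (k, r))))) *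
              (γ + ∑ r : Fin (p - 1), (ξ (i.1, r)) ^ 2 * Real.exp (-(y (i.1, r)))) ^ 2) := by
    intro y
    have Hd : ∀ k, HasFDerivAt
        (fun y' : Fin l × Fin (p - 1) → ℝ => γ + ∑ r : Fin (p - 1), (ξ (k, r)) ^ 2 * Real.exp (-(y' (k, r))))
        (∑ r : Fin (p-1), (ξ (k, r)) ^ 2 • (Real.exp (-(y (k, r))) •
          (-(ContinuousLinearMap.proj (R := ℝ) (φ := fun _ : Fin l × Fin (p-1) => ℝ) (k, r))))) y := by
      intro k
      refine HasFDerivAt.const_add γ (HasFDerivAt.fun_sum fun r _ => ?_)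
      have h := ((Real.hasDerivAt_exp (-(y (k, r)))).comp_hasFDerivAt y
        ((ContinuousLinearMap.proj (R := ℝ) (φ := fun _ : Fin l × Fin (p-1) => ℝ) (k, r)).hasFDerivAt.neg)).const_mul
        ((ξ (k, r)) ^ 2)
      simpa [Function.comp_def] using h
    have HS : HasFDerivAt
        (fun y' : Fin l × Fin (p - 1) → ℝ => ∑ k : Fin l,
          (ζ k) ^ 2 / (γ + ∑ r : Fin (p - 1), (ξ (k, r)) ^ 2 * Real.exp (-(y' (k, r)))))
        (∑ k : Fin l, ((0 * (γ + ∑ r : Fin (p - 1), (ξ (k, r)) ^ 2 * Real.exp (-(y (k, r)))) - (ζ k)^2 * 1) /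
            (γ + ∑ r : Fin (p - 1), (ξ (k, r)) ^ 2 * Real.exp (-(y (k, r)))) ^ 2) •
          (∑ r : Fin (p-1), (ξ (k, r)) ^ 2 • (Real.exp (-(y (k, r))) •
            (-(ContinuousLinearMap.proj (R := ℝ) (φ := fun _ : Fin l × Fin (p-1) => ℝ) (k, r)))))) y := by
      refine HasFDerivAt.fun_sum fun k _ => ?_
      have hdiv : HasDerivAt (fun x : ℝ => (ζ k) ^ 2 / x)
          ((0 * (γ + ∑ r : Fin (p - 1), (ξ (k, r)) ^ 2 * Real.exp (-(y (k, r)))) - (ζ k)^2 * 1) /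
            (γ + ∑ r : Fin (p - 1), (ξ (k, r)) ^ 2 * Real.exp (-(y (k, r)))) ^ 2)
          (γ + ∑ r : Fin (p - 1), (ξ (k, r)) ^ 2 * Real.exp (-(y (k, r)))) :=
        (hasDerivAt_const _ _).div (hasDerivAt_id _) (hdpos y k).ne'
      have h := hdiv.comp_hasFDerivAt y (Hd k)
      simpa [Function.comp_def] using h
    have Hg : HasFDerivAt g
        ((1 + ∑ k : Fin l, (ζ k) ^ 2 / (γ + ∑ r : Fin (p - 1), (ξ (k, r)) ^ 2 * Real.exp (-(y (k, r)))))⁻¹ •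
        (∑ k : Fin l, ((0 * (γ + ∑ r : Fin (p - 1), (ξ (k, r)) ^ 2 * Real.exp (-(y (k, r)))) - (ζ k)^2 * 1) /
            (γ + ∑ r : Fin (p - 1), (ξ (k, r)) ^ 2 * Real.exp (-(y (k, r)))) ^ 2) •
          (∑ r : Fin (p-1), (ξ (k, r)) ^ 2 • (Real.exp (-(y (k, r))) •
            (-(ContinuousLinearMap.proj (R := ℝ) (φ := fun _ : Fin l × Fin (p-1) => ℝ) (k, r))))))) y := by
      have h := (Real.hasDerivAt_log (h1S y).ne').comp_hasFDerivAt y (HS.const_add 1)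
      simpa [Function.comp_def, one_div] using h
    refine ⟨_, Hg, fun i => ?_⟩
    obtain ⟨a, b⟩ := i
    simp only [ContinuousLinearMap.smul_apply, ContinuousLinearMap.coe_sum',
      Finset.sum_apply, ContinuousLinearMap.neg_apply, ContinuousLinearMap.proj_apply,
      Pi.single_apply, smul_eq_mul, Prod.mk.injEq]
    have h2 : ∀ x : Fin l, (∑ x_1 : Fin (p-1),
        ξ (x, x_1) ^ 2 * (Real.exp (-y (x, x_1)) * -if x = a ∧ x_1 = b then (1:ℝ) else 0)) =
        if x = a then -(ξ (x, b) ^ 2 * Real.exp (-y (x, b))) else 0 := by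
      intro x
      by_cases hx : x = a
      · subst hx
        simp [Finset.sum_ite_eq', mul_ite]
      · simp [hx]
    simp only [h2, mul_ite, mul_zero, Finset.sum_ite_eq', Finset.mem_univ, if_true]
    have hne1 : (1 + ∑ k : Fin l, ζ k ^ 2 / (γ + ∑ r : Fin (p - 1), ξ (k, r) ^ 2 * Real.exp (-y (k, r)))) ≠ 0 :=
      (h1S y).ne'
    have hne2 : (γ + ∑ r : Fin (p - 1), ξ (a, r) ^ 2 * Real.exp (-y (a, r))) ≠ 0 := (hdpos y a).ne'
    field_simp
    ring
  constructor
  · exact fun y => ((key y).choose_spec.1).differentiableAt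
  · intro y hy
    obtain ⟨G, hG, hGval⟩ := key y
    rw [hG.fderiv]
    have habs : ∀ i : Fin l × Fin (p - 1), |G (Pi.single i 1)| =
        (ζ i.1) ^ 2 * ((ξ i) ^ 2 * Real.exp (-(y i))) /
          ((1 + ∑ k : Fin l, (ζ k) ^ 2 / (γ + ∑ r : Fin (p - 1), (ξ (k, r)) ^ 2 * Real.exp (-(y (k, r))))) *
            (γ + ∑ r : Fin (p - 1), (ξ (i.1, r)) ^ 2 * Real.exp (-(y (i.1, r)))) ^ 2) := by
      intro i
      rw [hGval i]
      refine abs_of_nonneg (div_nonneg (by positivity) ?_)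
      exact (mul_pos (h1S y) (pow_pos (hdpos y i.1) 2)).le
    rw [Finset.sum_congr rfl fun i _ => habs i]
    have hSle : (∑ k : Fin l, (ζ k) ^ 2 / (γ + ∑ r : Fin (p - 1), (ξ (k, r)) ^ 2 * Real.exp (-(y (k, r)))))
        ≤ (∑ k : Fin l, (ζ k) ^ 2) / γ := by
      rw [Finset.sum_div]
      refine Finset.sum_le_sum fun k _ => ?_
      exact div_le_div_of_nonneg_left (sq_nonneg _) hγ
        (le_add_of_nonneg_right (Finset.sum_nonneg fun r _ => by positivity))
    have hχ : (0:ℝ) ≤ ∑ k : Fin l, (ζ k) ^ 2 := Finset.sum_nonneg fun k _ => sq_nonneg _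
    calc ∑ i : Fin l × Fin (p - 1),
          (ζ i.1) ^ 2 * ((ξ i) ^ 2 * Real.exp (-(y i))) /
            ((1 + ∑ k : Fin l, (ζ k) ^ 2 / (γ + ∑ r : Fin (p - 1), (ξ (k, r)) ^ 2 * Real.exp (-(y (k, r))))) *
              (γ + ∑ r : Fin (p - 1), (ξ (i.1, r)) ^ 2 * Real.exp (-(y (i.1, r)))) ^ 2)
        = ∑ k : Fin l, (ζ k) ^ 2 * (∑ r : Fin (p - 1), (ξ (k, r)) ^ 2 * Real.exp (-(y (k, r)))) /
            ((1 + ∑ k : Fin l, (ζ k) ^ 2 / (γ + ∑ r : Fin (p - 1), (ξ (k, r)) ^ 2 * Real.exp (-(y (k, r))))) *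
              (γ + ∑ r : Fin (p - 1), (ξ (k, r)) ^ 2 * Real.exp (-(y (k, r)))) ^ 2) := by
          rw [Fintype.sum_prod_type]
          refine Finset.sum_congr rfl fun k _ => ?_
          dsimp only
          rw [← Finset.sum_div, ← Finset.mul_sum]
      _ ≤ ∑ k : Fin l, ((ζ k) ^ 2 / (γ + ∑ r : Fin (p - 1), (ξ (k, r)) ^ 2 * Real.exp (-(y (k, r))))) /
            (1 + ∑ k : Fin l, (ζ k) ^ 2 / (γ + ∑ r : Fin (p - 1), (ξ (k, r)) ^ 2 * Real.exp (-(y (k, r))))) := by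
          refine Finset.sum_le_sum fun k _ => ?_
          have hD := hdpos y k
          have hS1 := h1S y
          have hsum0 : (0:ℝ) ≤ ∑ r : Fin (p - 1), (ξ (k, r)) ^ 2 * Real.exp (-(y (k, r))) :=
            Finset.sum_nonneg fun r _ => by positivity
          rw [div_div, div_le_div_iff₀ (mul_pos hS1 (pow_pos hD 2))
            (mul_pos hD hS1)]
          have ha : (0:ℝ) ≤ ζ k ^ 2 := sq_nonneg _
          nlinarith [mul_nonneg (mul_nonneg (mul_nonneg ha hS1.le) hD.le) hγ.le,
            mul_nonneg (mul_nonneg (mul_nonneg ha hS1.le) hD.le) hsum0]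
      _ = (∑ k : Fin l, (ζ k) ^ 2 / (γ + ∑ r : Fin (p - 1), (ξ (k, r)) ^ 2 * Real.exp (-(y (k, r))))) /
            (1 + ∑ k : Fin l, (ζ k) ^ 2 / (γ + ∑ r : Fin (p - 1), (ξ (k, r)) ^ 2 * Real.exp (-(y (k, r))))) := by
          rw [← Finset.sum_div]
      _ ≤ (∑ k : Fin l, (ζ k) ^ 2) / (γ + ∑ k : Fin l, (ζ k) ^ 2) := by
          rw [div_le_div_iff₀ (h1S y) (by linarith)]
          have hSγ : (∑ k : Fin l, (ζ k) ^ 2 / (γ + ∑ r : Fin (p - 1), (ξ (k, r)) ^ 2 * Real.exp (-(y (k, r))))) * γ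
              ≤ ∑ k : Fin l, (ζ k) ^ 2 := by
            rw [← le_div_iff₀ hγ]
            exact hSle
          nlinarith [hSnonneg y]
end

section
/- Let F: [−λ, λ] → ℝ be a convex differentiable function, and let G: [−λ, λ] → ℝ be convex differentiable with the same domain. Then |F'(0) − G'(0)| ≤ (1/λ)(|F(λ)−G(λ)| + |F(−λ)−G(−λ)| + |F(0)−G(0)|) + (G'(λ) − G'(−λ)). -/
/-- convexity interpolation lemma:
|F'(0) − G'(0)| ≤ (1/λ)(|F(λ)−G(λ)| + |F(−λ)−G(−λ)| + |F(0)−G(0)|) + (G'(λ) − G'(−λ)). -/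
theorem stmt_14 (lam : ℝ) (hlam : 0 < lam) (F G F' G' : ℝ → ℝ)
    (hF : ConvexOn ℝ (Set.Icc (-lam) lam) F) (hG : ConvexOn ℝ (Set.Icc (-lam) lam) G)
    (hF' : ∀ t ∈ Set.Icc (-lam) lam, HasDerivWithinAt F (F' t) (Set.Icc (-lam) lam) t)
    (hG' : ∀ t ∈ Set.Icc (-lam) lam, HasDerivWithinAt G (G' t) (Set.Icc (-lam) lam) t) :
    |F' 0 - G' 0|
      ≤ (1 / lam) * (|F lam - G lam| + |F (-lam) - G (-lam)| + |F 0 - G 0|)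
        + (G' lam - G' (-lam)) := by
  have hm0 : (0 : ℝ) ∈ Set.Icc (-lam) lam := ⟨by linarith, hlam.le⟩
  have hmr : lam ∈ Set.Icc (-lam) lam := ⟨by linarith, le_rfl⟩
  have hml : -lam ∈ Set.Icc (-lam) lam := ⟨le_rfl, by linarith⟩
  have hneg : -lam < 0 := by linarith
  -- slope inequalities
  have h1 : F' 0 ≤ slope F 0 lam :=
    hF.le_slope_of_hasDerivWithinAt hm0 hmr hlam (hF' 0 hm0)
  have h2 : slope F (-lam) 0 ≤ F' 0 :=
    hF.slope_le_of_hasDerivWithinAt hml hm0 hneg (hF' 0 hm0)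
  have h3 : G' 0 ≤ slope G 0 lam :=
    hG.le_slope_of_hasDerivWithinAt hm0 hmr hlam (hG' 0 hm0)
  have h4 : slope G (-lam) 0 ≤ G' 0 :=
    hG.slope_le_of_hasDerivWithinAt hml hm0 hneg (hG' 0 hm0)
  have h5 : slope G 0 lam ≤ G' lam :=
    hG.slope_le_of_hasDerivWithinAt hm0 hmr hlam (hG' lam hmr)
  have h6 : G' (-lam) ≤ slope G (-lam) 0 :=
    hG.le_slope_of_hasDerivWithinAt hml hm0 hneg (hG' (-lam) hml)
  have hsF1 : slope F 0 lam = (F lam - F 0) / lam := by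
    rw [slope_def_field]; norm_num
  have hsF2 : slope F (-lam) 0 = (F 0 - F (-lam)) / lam := by
    rw [slope_def_field]; norm_num
  have hsG1 : slope G 0 lam = (G lam - G 0) / lam := by
    rw [slope_def_field]; norm_num
  have hsG2 : slope G (-lam) 0 = (G 0 - G (-lam)) / lam := by
    rw [slope_def_field]; norm_num
  rw [hsF1] at h1; rw [hsF2] at h2; rw [hsG1] at h3 h5; rw [hsG2] at h4 h6
  have h5' : G lam - G 0 <= G' lam * lam := by
    rw [div_le_iff₀ hlam] at h5; linarith
  have h6' : G' (-lam) * lam <= G 0 - G (-lam) := by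
    rw [le_div_iff₀ hlam] at h6; linarith
  have ha : F lam - G lam <= |F lam - G lam| := le_abs_self _
  have ha' : -(F lam - G lam) <= |F lam - G lam| := neg_le_abs _
  have hb : F (-lam) - G (-lam) <= |F (-lam) - G (-lam)| := le_abs_self _
  have hb' : -(F (-lam) - G (-lam)) <= |F (-lam) - G (-lam)| := neg_le_abs _
  have hc : F 0 - G 0 <= |F 0 - G 0| := le_abs_self _
  have hc' : -(F 0 - G 0) <= |F 0 - G 0| := neg_le_abs _
  set S := |F lam - G lam| + |F (-lam) - G (-lam)| + |F 0 - G 0| with hS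
  have heq : (1 / lam * S + (G' lam - G' (-lam))) * lam = S + (G' lam - G' (-lam)) * lam := by
    field_simp
  rw [abs_sub_le_iff]
  constructor
  · have key : F' 0 - G' 0 <= (F lam - F 0 - (G 0 - G (-lam))) / lam := by
      rw [sub_div]; linarith
    refine key.trans ?_
    rw [div_le_iff₀ hlam, heq]
    linarith
  · have key : G' 0 - F' 0 <= (G lam - G 0 - (F 0 - F (-lam))) / lam := by
      rw [sub_div]; linarith
    refine key.trans ?_
    rw [div_le_iff₀ hlam, heq]
    linarith
end

section
/- Let D and E be n×n real symmetric matrices and ζ ∈ ℝ^n, β > 0, where D is diagonal with diagonal entries ≥ 1 and 2βζζ^T + D + E is invertible with ‖(2βζζ^T + D + E)^{-1}‖ ≤ 1. Then |ζ^T(2βζζ^T + D + E)^{-1}ζ − ζ^T(2βζζ^T + D)^{-1}ζ| ≤ ‖ζ‖² ‖E‖, and moreover 1 − 2βζ^T(2βζζ^T + D)^{-1}ζ = 1/(1 + 2βζ^T D^{-1}ζ). -/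
open Matrix

lemma cs_dot {n : ℕ} (u v : Fin n → ℝ) : (u ⬝ᵥ v) ^ 2 ≤ (u ⬝ᵥ u) * (v ⬝ᵥ v) := by
  simpa [dotProduct, sq] using Finset.sum_mul_sq_le_sq_mul_sq Finset.univ u v

lemma dot_self_nonneg {n : ℕ} (v : Fin n → ℝ) : 0 ≤ v ⬝ᵥ v :=
  Finset.sum_nonneg fun i _ => mul_self_nonneg _

set_option maxHeartbeats 1000000 in
/-- perturbation bound and Sherman–Morrison identity for quadratic
forms: |ζᵀ(2βζζᵀ+D+E)⁻¹ζ − ζᵀ(2βζζᵀ+D)⁻¹ζ| ≤ ‖ζ‖²‖E‖, and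
1 − 2βζᵀ(2βζζᵀ+D)⁻¹ζ = 1/(1 + 2βζᵀD⁻¹ζ).  Operator norms are expressed via
quadratic-form bounds on the ℓ² norm. -/
theorem stmt_15 {n : ℕ} (β : ℝ) (hβ : 0 < β) (d : Fin n → ℝ) (hd : ∀ i, 1 ≤ d i)
    (E : Matrix (Fin n) (Fin n) ℝ) (hE : E.IsSymm) (ζ : Fin n → ℝ)
    (hInv :
      IsUnit ((2 * β) • Matrix.vecMulVec ζ ζ + Matrix.diagonal d + E).det)
    (hOp : ∀ v : Fin n → ℝ,
      (((2 * β) • Matrix.vecMulVec ζ ζ + Matrix.diagonal d + E)⁻¹ *ᵥ v) ⬝ᵥ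
          (((2 * β) • Matrix.vecMulVec ζ ζ + Matrix.diagonal d + E)⁻¹ *ᵥ v)
        ≤ v ⬝ᵥ v)
    (e : ℝ) (he : 0 ≤ e)
    (hEnorm : ∀ v : Fin n → ℝ, (E *ᵥ v) ⬝ᵥ (E *ᵥ v) ≤ e ^ 2 * (v ⬝ᵥ v)) :
    |ζ ⬝ᵥ ((2 * β) • Matrix.vecMulVec ζ ζ + Matrix.diagonal d + E)⁻¹ *ᵥ ζ
        - ζ ⬝ᵥ ((2 * β) • Matrix.vecMulVec ζ ζ + Matrix.diagonal d)⁻¹ *ᵥ ζ|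
      ≤ (ζ ⬝ᵥ ζ) * e ∧
    1 - 2 * β * (ζ ⬝ᵥ ((2 * β) • Matrix.vecMulVec ζ ζ + Matrix.diagonal d)⁻¹ *ᵥ ζ)
      = 1 / (1 + 2 * β * (ζ ⬝ᵥ (Matrix.diagonal d)⁻¹ *ᵥ ζ)) := by
  set A : Matrix (Fin n) (Fin n) ℝ := (2 * β) • Matrix.vecMulVec ζ ζ + Matrix.diagonal d
    with hAdef
  set B : Matrix (Fin n) (Fin n) ℝ := (2 * β) • Matrix.vecMulVec ζ ζ + Matrix.diagonal d + E
    with hBdef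
  -- basic facts
  have hvvT : (Matrix.vecMulVec ζ ζ)ᵀ = Matrix.vecMulVec ζ ζ := by
    ext i j
    simp [Matrix.vecMulVec_apply, mul_comm]
  have hAsym : Aᵀ = A := by
    rw [hAdef, Matrix.transpose_add, Matrix.transpose_smul, hvvT, Matrix.diagonal_transpose]
  have hBsym : Bᵀ = B := by
    rw [hBdef, Matrix.transpose_add, Matrix.transpose_add, Matrix.transpose_smul, hvvT,
      Matrix.diagonal_transpose, hE.eq]
  have hvv : ∀ v : Fin n → ℝ, Matrix.vecMulVec ζ ζ *ᵥ v = (ζ ⬝ᵥ v) • ζ := by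
    intro v
    funext i
    simp only [Matrix.mulVec, dotProduct, Matrix.vecMulVec_apply, Pi.smul_apply, smul_eq_mul]
    rw [Finset.sum_mul]
    exact Finset.sum_congr rfl fun j _ => by ring
  have hmv : ∀ v : Fin n → ℝ, A *ᵥ v = fun i => 2 * β * (ζ ⬝ᵥ v) * ζ i + d i * v i := by
    intro v
    funext i
    rw [hAdef, Matrix.add_mulVec, Matrix.smul_mulVec, hvv]
    simp only [Pi.add_apply, Pi.smul_apply, smul_eq_mul, Matrix.mulVec_diagonal]
    ring
  have hquad : ∀ v : Fin n → ℝ, v ⬝ᵥ v ≤ v ⬝ᵥ (A *ᵥ v) := by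
    intro v
    rw [hmv v]
    have key : ∀ t : ℝ, v ⬝ᵥ (fun i => 2 * β * t * ζ i + d i * v i)
        = 2 * β * t * (v ⬝ᵥ ζ) + ∑ i, v i * (d i * v i) := by
      intro t
      simp only [dotProduct, mul_add, Finset.sum_add_distrib]
      congr 1
      rw [Finset.mul_sum]
      exact Finset.sum_congr rfl fun i _ => by ring
    rw [key (ζ ⬝ᵥ v)]
    have h1 : 0 ≤ 2 * β * (ζ ⬝ᵥ v) * (v ⬝ᵥ ζ) := by
      rw [dotProduct_comm v ζ]
      nlinarith [mul_self_nonneg (ζ ⬝ᵥ v)]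
    have h2 : v ⬝ᵥ v ≤ ∑ i, v i * (d i * v i) := by
      refine Finset.sum_le_sum fun i _ => ?_
      nlinarith [mul_self_nonneg (v i), hd i]
    linarith
  -- A is positive definite hence invertible
  have hApd : A.PosDef := by
    refine Matrix.PosDef.of_dotProduct_mulVec_pos (by rwa [Matrix.IsHermitian, Matrix.conjTranspose_eq_transpose_of_trivial]) ?_
    intro x hx
    have h0 : 0 < x ⬝ᵥ x := by
      rcases lt_or_eq_of_le (dot_self_nonneg x) with h | h
      · exact h
      · exact absurd (dotProduct_self_eq_zero.mp h.symm) hx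
    calc (0:ℝ) < x ⬝ᵥ x := h0
      _ ≤ x ⬝ᵥ (A *ᵥ x) := hquad x
      _ = star x ⬝ᵥ (A *ᵥ x) := by simp
  have hAdet : IsUnit A.det := hApd.det_pos.ne'.isUnit
  -- x = A⁻¹ ζ, y = B⁻¹ ζ
  set x : Fin n → ℝ := A⁻¹ *ᵥ ζ with hxdef
  set y : Fin n → ℝ := B⁻¹ *ᵥ ζ with hydef
  have hAx : A *ᵥ x = ζ := by
    rw [hxdef, Matrix.mulVec_mulVec, Matrix.mul_nonsing_inv _ hAdet, Matrix.one_mulVec]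
  have hxx : x ⬝ᵥ x ≤ ζ ⬝ᵥ ζ := by
    have h1 : x ⬝ᵥ x ≤ x ⬝ᵥ ζ := by have := hquad x; rwa [hAx] at this
    have h2 := cs_dot x ζ
    have h3 := dot_self_nonneg x
    have h4 := dot_self_nonneg ζ
    nlinarith
  have hyy : y ⬝ᵥ y ≤ ζ ⬝ᵥ ζ := hOp ζ
  -- Sherman-Morrison part (part 2)
  set c : ℝ := ζ ⬝ᵥ x with hcdef
  have hdx : ∀ i, d i * x i = (1 - 2 * β * c) * ζ i := by
    intro i
    have := congrFun hAx i
    rw [hmv x] at this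
    simp only at this
    rw [hcdef]
    linarith [this]
  have hdpos : ∀ i, (0:ℝ) < d i := fun i => lt_of_lt_of_le one_pos (hd i)
  set s : ℝ := ∑ i, ζ i * ((d i)⁻¹ * ζ i) with hsdef
  have hs_nonneg : 0 ≤ s := Finset.sum_nonneg fun i _ => by
    have := (hdpos i).le
    have h := inv_nonneg.mpr this
    nlinarith [mul_self_nonneg (ζ i)]
  have hxi : ∀ i, x i = (1 - 2 * β * c) * ((d i)⁻¹ * ζ i) := by
    intro i
    have hne : d i ≠ 0 := (hdpos i).ne'
    have h2 : x i = (d i)⁻¹ * ((1 - 2 * β * c) * ζ i) := by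
      rw [← hdx i]
      field_simp
    rw [h2]
    ring
  have hcs : c = (1 - 2 * β * c) * s := by
    rw [hcdef]
    show ∑ i, ζ i * x i = _
    rw [hsdef, Finset.mul_sum]
    exact Finset.sum_congr rfl fun i _ => by rw [hxi i]; ring
  have hDinv : ζ ⬝ᵥ (Matrix.diagonal d)⁻¹ *ᵥ ζ = s := by
    have hone : Matrix.diagonal d * Matrix.diagonal (fun i => (d i)⁻¹) = 1 := by
      rw [Matrix.diagonal_mul_diagonal]
      have : (fun i => d i * (d i)⁻¹) = fun _ : Fin n => (1:ℝ) := by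
        funext i
        exact mul_inv_cancel₀ (hdpos i).ne' 
      rw [this, Matrix.diagonal_one]
    rw [Matrix.inv_eq_right_inv hone, hsdef]
    simp only [dotProduct, Matrix.mulVec_diagonal]
  have hden : (0:ℝ) < 1 + 2 * β * s := by nlinarith
  have part2 : 1 - 2 * β * c = 1 / (1 + 2 * β * s) := by
    rw [eq_div_iff hden.ne']
    nlinarith [hcs]
  -- Perturbation part (part 1)
  have hBinvsym : (B⁻¹)ᵀ = B⁻¹ := by
    rw [Matrix.transpose_nonsing_inv, hBsym]
  have hkey : B⁻¹ = A⁻¹ - B⁻¹ * E * A⁻¹ := by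
    have h1 : B⁻¹ * A * A⁻¹ = B⁻¹ := by
      rw [Matrix.mul_assoc, Matrix.mul_nonsing_inv _ hAdet, Matrix.mul_one]
    have h2 : B⁻¹ * B * A⁻¹ = A⁻¹ := by
      rw [Matrix.nonsing_inv_mul _ hInv, Matrix.one_mul]
    have hBAE : B = A + E := by rw [hBdef, hAdef]
    have h3 : B⁻¹ * B * A⁻¹ = B⁻¹ * A * A⁻¹ + B⁻¹ * E * A⁻¹ := by
      conv_lhs => rw [hBAE]
      rw [Matrix.mul_add, Matrix.add_mul]
    rw [h1, h2] at h3
    exact eq_sub_iff_add_eq.mpr h3.symm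
  have hdiff : ζ ⬝ᵥ B⁻¹ *ᵥ ζ - ζ ⬝ᵥ A⁻¹ *ᵥ ζ = -(y ⬝ᵥ (E *ᵥ x)) := by
    have h1 : ζ ⬝ᵥ B⁻¹ *ᵥ ζ = ζ ⬝ᵥ A⁻¹ *ᵥ ζ - ζ ⬝ᵥ (B⁻¹ * E * A⁻¹) *ᵥ ζ := by
      conv_lhs => rw [hkey]
      rw [Matrix.sub_mulVec, dotProduct_sub]
    have h2 : ζ ⬝ᵥ (B⁻¹ * E * A⁻¹) *ᵥ ζ = y ⬝ᵥ (E *ᵥ x) := by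
      rw [show B⁻¹ * E * A⁻¹ = B⁻¹ * (E * A⁻¹) from Matrix.mul_assoc _ _ _]
      rw [← Matrix.mulVec_mulVec, Matrix.dotProduct_mulVec, ← Matrix.mulVec_transpose,
        hBinvsym, ← hydef, ← Matrix.mulVec_mulVec, ← hxdef]
    rw [h1, h2]; ring
  constructor
  · rw [hdiff, abs_neg]
    have hEx : (E *ᵥ x) ⬝ᵥ (E *ᵥ x) ≤ e ^ 2 * (ζ ⬝ᵥ ζ) := by
      calc (E *ᵥ x) ⬝ᵥ (E *ᵥ x) ≤ e ^ 2 * (x ⬝ᵥ x) := hEnorm x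
        _ ≤ e ^ 2 * (ζ ⬝ᵥ ζ) := by nlinarith [sq_nonneg e]
    have hcs2 := cs_dot y (E *ᵥ x)
    have h4 := dot_self_nonneg ζ
    have h5 := dot_self_nonneg (E *ᵥ x)
    have h6 := dot_self_nonneg y
    have hsq : (y ⬝ᵥ (E *ᵥ x)) ^ 2 ≤ ((ζ ⬝ᵥ ζ) * e) ^ 2 := by nlinarith
    nlinarith [abs_nonneg (y ⬝ᵥ (E *ᵥ x)), sq_abs (y ⬝ᵥ (E *ᵥ x)), mul_nonneg h4 he]
  · rw [hDinv]
    exact part2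
end
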